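/- Contractivity of the deterministic quantizer. Let b ≥ 1 be an integer, d ≥ 1, and let x ∈ ℝ^d with x ≠ 0. Set τ = 2‖x‖_∞/(2^b − 1), q(x)_i = ⌊(x_i + ‖x‖_∞)/τ + 1/2⌋ for each coordinate i, and C(x) = τ q(x) − ‖x‖_∞ 𝟙_d. Then ‖C(x) − x‖² ≤ (d/(2^b − 1)²) ‖x‖_∞² ≤ (d/(2^b − 1)²) ‖x‖². Consequently, if 2^b − 1 > √d (and with C(0) := 0), C is a δ-contractive compressor with δ = d/(2^b − 1)². -/

import Mathlib

noncomputable section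

/-- The sup-norm `‖x‖_∞` of a vector in `ℝ^d`. -/
def infNorm {d : ℕ} (x : Fin d → ℝ) : ℝ := ⨆ i, |x i|

/-- The step size `τ = 2‖x‖_∞ / (2^b - 1)` of the deterministic quantizer. -/
def qStep (b : ℕ) {d : ℕ} (x : Fin d → ℝ) : ℝ := 2 * infNorm x / (2 ^ b - 1)

/-- The deterministic `b`-bit quantizer `C(x) = τ q(x) - ‖x‖_∞ 𝟙`, where
`q(x)_i = ⌊(x_i + ‖x‖_∞)/τ + 1/2⌋`.  (It maps `0` to `0`.) -/
def detQuant (b : ℕ) {d : ℕ} (x : Fin d → ℝ) : Fin d → ℝ :=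
  fun i => qStep b x * (⌊(x i + infNorm x) / qStep b x + 1 / 2⌋ : ℤ) - infNorm x

lemma detQuant_key (b d : ℕ) (hb : 1 ≤ b) (hd : 1 ≤ d)
    (x : Fin d → ℝ) (hx : x ≠ 0) :
    (∑ i, (detQuant b x i - x i) ^ 2 ≤ (d / ((2 : ℝ) ^ b - 1) ^ 2) * infNorm x ^ 2) ∧
      infNorm x ^ 2 ≤ ∑ i, (x i) ^ 2 := by
  haveI : Nonempty (Fin d) := ⟨⟨0, hd⟩⟩
  have hden : (1 : ℝ) ≤ 2 ^ b - 1 := by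
    have : (2 : ℝ) ^ 1 ≤ 2 ^ b := pow_le_pow_right₀ one_le_two hb
    simp at this; linarith
  have hden0 : (0 : ℝ) < 2 ^ b - 1 := by linarith
  have hbdd : BddAbove (Set.range fun i => |x i|) := Set.Finite.bddAbove (Set.finite_range _)
  obtain ⟨i₀, hi₀⟩ := Function.ne_iff.mp hx
  obtain ⟨im, him⟩ := Finite.exists_max (fun i => |x i|)
  have hMle : infNorm x ≤ |x im| := ciSup_le him
  have hMge : ∀ i, |x i| ≤ infNorm x := fun i => le_ciSup hbdd i
  have hM : 0 < infNorm x := lt_of_lt_of_le (abs_pos.mpr hi₀) (hMge i₀)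
  have hτ : 0 < qStep b x := by
    unfold qStep; positivity
  constructor
  · have hterm : ∀ i : Fin d, (detQuant b x i - x i) ^ 2
        ≤ infNorm x ^ 2 / ((2 : ℝ) ^ b - 1) ^ 2 := by
      intro i
      set τ := qStep b x with hτdef
      set y := x i + infNorm x with hy
      set n : ℤ := ⌊y / τ + 1 / 2⌋ with hn
      have h1 : (n : ℝ) ≤ y / τ + 1 / 2 := Int.floor_le _
      have h2 : y / τ + 1 / 2 < n + 1 := Int.lt_floor_add_one _
      have hdq : detQuant b x i - x i = τ * n - y := by
        simp [detQuant, hy, hτdef, hn]; ring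
      rw [hdq]
      have hyτ : y = τ * (y / τ) := by field_simp
      have hsq : (τ * n - y) ^ 2 ≤ (τ / 2) ^ 2 := by
        rw [hyτ]
        have e : τ * n - τ * (y / τ) = τ * ((n : ℝ) - y / τ) := by ring
        rw [e]
        have h3 : -(1/2 : ℝ) ≤ (n : ℝ) - y / τ := by linarith
        have h4 : ((n : ℝ) - y / τ) ≤ 1/2 := by linarith
        have hu : ((n : ℝ) - y / τ) ^ 2 ≤ (1 / 2 : ℝ) ^ 2 := by nlinarith
        calc (τ * ((n : ℝ) - y / τ)) ^ 2 = τ ^ 2 * ((n : ℝ) - y / τ) ^ 2 := by ring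
          _ ≤ τ ^ 2 * (1 / 2 : ℝ) ^ 2 := mul_le_mul_of_nonneg_left hu (sq_nonneg τ)
          _ = (τ / 2) ^ 2 := by ring
      calc (τ * n - y) ^ 2 ≤ (τ / 2) ^ 2 := hsq
        _ = infNorm x ^ 2 / ((2 : ℝ) ^ b - 1) ^ 2 := by
            rw [hτdef]; unfold qStep; field_simp
    calc ∑ i, (detQuant b x i - x i) ^ 2
        ≤ ∑ _i : Fin d, infNorm x ^ 2 / ((2 : ℝ) ^ b - 1) ^ 2 :=
          Finset.sum_le_sum fun i _ => hterm i
      _ = (d / ((2 : ℝ) ^ b - 1) ^ 2) * infNorm x ^ 2 := by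
          rw [Finset.sum_const]; simp; ring
  · have h1 : infNorm x ^ 2 ≤ (x im) ^ 2 := by
      rw [← sq_abs (x im)]
      exact pow_le_pow_left₀ hM.le hMle 2
    refine h1.trans ?_
    exact Finset.single_le_sum (fun i _ => sq_nonneg (x i)) (Finset.mem_univ im)

/-- **Contractivity of the deterministic quantizer.** For `x ≠ 0`,
`‖C(x) - x‖² ≤ (d/(2^b-1)²)‖x‖_∞² ≤ (d/(2^b-1)²)‖x‖²`; consequently, if `√d < 2^b - 1`,
the quantizer is a `δ`-contractive compressor with `δ = d/(2^b-1)²`. -/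
theorem detQuant_contractive (b d : ℕ) (hb : 1 ≤ b) (hd : 1 ≤ d)
    (x : Fin d → ℝ) (hx : x ≠ 0) :
    ((∑ i, (detQuant b x i - x i) ^ 2 ≤ (d / ((2 : ℝ) ^ b - 1) ^ 2) * infNorm x ^ 2) ∧
      (d / ((2 : ℝ) ^ b - 1) ^ 2) * infNorm x ^ 2
        ≤ (d / ((2 : ℝ) ^ b - 1) ^ 2) * ∑ i, (x i) ^ 2) ∧
    (Real.sqrt d < 2 ^ b - 1 →
      0 ≤ (d : ℝ) / ((2 : ℝ) ^ b - 1) ^ 2 ∧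
      (d : ℝ) / ((2 : ℝ) ^ b - 1) ^ 2 < 1 ∧
      ∀ z : Fin d → ℝ,
        ∑ i, (detQuant b z i - z i) ^ 2
          ≤ (d / ((2 : ℝ) ^ b - 1) ^ 2) * ∑ i, (z i) ^ 2) := by
  haveI : Nonempty (Fin d) := ⟨⟨0, hd⟩⟩
  have hden0 : (0 : ℝ) < 2 ^ b - 1 := by
    have : (2 : ℝ) ^ 1 ≤ 2 ^ b := pow_le_pow_right₀ one_le_two hb
    simp at this; linarith
  have hδ : (0 : ℝ) ≤ (d : ℝ) / ((2 : ℝ) ^ b - 1) ^ 2 := by positivity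
  obtain ⟨hk1, hk2⟩ := detQuant_key b d hb hd x hx
  refine ⟨⟨hk1, mul_le_mul_of_nonneg_left hk2 hδ⟩, fun hsq => ⟨hδ, ?_, ?_⟩⟩
  · rw [div_lt_one (by positivity)]
    have := Real.sq_sqrt (Nat.cast_nonneg d : (0:ℝ) ≤ d)
    nlinarith [Real.sqrt_nonneg (d : ℝ)]
  · intro z
    by_cases hz : z = 0
    · subst hz
      have hinf : infNorm (0 : Fin d → ℝ) = 0 := by
        simp [infNorm]
      have : ∀ i : Fin d, detQuant b (0 : Fin d → ℝ) i = 0 := by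
        intro i; simp [detQuant, hinf, qStep]
      simp [this]
    · obtain ⟨h1, h2⟩ := detQuant_key b d hb hd z hz
      exact h1.trans (mul_le_mul_of_nonneg_left h2 hδ)
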